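/- Let φ_4 : {0,1,2,3} → ℝ be given by φ_4(0) = 0, φ_4(1) = 1, φ_4(2) = 8/5, φ_4(3) = 1. Then for every f : ℤ_4 → [0,∞), with Fourier coefficients a_k = (1/4)∑_{x=0}^{3} f(x)·e^{−2πikx/4}, one has (1/4)∑_{x=0}^{3} f(x)² log(f(x)²) − ((1/4)∑_x f(x)²)·log((1/4)∑_x f(x)²) ≤ 2·∑_{k=0}^{3} φ_4(k)·|a_k|², with the convention y·log(y) = 0 at y = 0. -/

import Mathlib

open scoped BigOperators

/-- Fourier coefficient `a_k = (1/n) ∑_x f(x) e^{-2πikx/n}` of a real function. -/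
noncomputable def fcoeffR (n : ℕ) (f : Fin n → ℝ) (k : Fin n) : ℂ :=
  (1 / n : ℂ) * ∑ x : Fin n, (f x : ℂ) *
    Complex.exp (-(2 * Real.pi * Complex.I * (k.val : ℂ) * (x.val : ℂ)) / n)

/-- The modified weight `φ_4 = (0, 1, 8/5, 1)` on `ℤ_4`. -/
noncomputable def phi4 : Fin 4 → ℝ := ![0, 1, 8/5, 1]

section Aux
open Real Finset

lemma lq (x : ℝ) (h0 : 0 ≤ x) (h1 : x ≤ 1) :
    1 + (1/2)*x - (1/8)*x^2 + (1/16)*x^3 - (5/128)*x^4 + (7/256)*x^5 - (21/1024)*x^6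
      ≤ Real.sqrt (1+x) := by
  have h1x : (0:ℝ) ≤ 1 - x := by linarith
  apply Real.le_sqrt_of_sq_le
  nlinarith [mul_nonneg (mul_nonneg (pow_nonneg h0 7) (pow_nonneg h1x 5)) (by norm_num : (0:ℝ) ≤ 33/1024),
    mul_nonneg (mul_nonneg (pow_nonneg h0 8) (pow_nonneg h1x 4)) (by norm_num : (0:ℝ) ≤ 2475/16384),
    mul_nonneg (mul_nonneg (pow_nonneg h0 9) (pow_nonneg h1x 3)) (by norm_num : (0:ℝ) ≤ 4697/16384),
    mul_nonneg (mul_nonneg (pow_nonneg h0 10) (pow_nonneg h1x 2)) (by norm_num : (0:ℝ) ≤ 8965/32768),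
    mul_nonneg (mul_nonneg (pow_nonneg h0 11) (pow_nonneg h1x 1)) (by norm_num : (0:ℝ) ≤ 17219/131072),
    mul_nonneg (pow_nonneg h0 12) (by norm_num : (0:ℝ) ≤ 26431/1048576)]

lemma lA (e : ℝ) (h0 : 0 ≤ e) (h1 : e < 1) :
    (1+e)^9 * Real.log (1+e) ≤
      1*e + (17/2)*e^2 + (191/6)*e^3 + (275/4)*e^4 + (1879/20)*e^5 + (2509/30)*e^6
        + (3349/70)*e^7 + (4609/280)*e^8 + (7129/2520)*e^9 + 1*e^10 := by
  have hpe : (0:ℝ) < 1 + e := by linarith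
  set y : ℝ := e / (1+e) with hy
  have hy0 : 0 ≤ y := by positivity
  have hy1 : y < 1 := by
    rw [hy, div_lt_one hpe]; linarith
  have hylt : |y| < 1 := by rw [abs_of_nonneg hy0]; exact hy1
  have habs := Real.abs_log_sub_add_sum_range_le hylt 9
  have h1my : 1 - y = (1+e)⁻¹ := by
    rw [hy]; field_simp; ring
  have hlog : Real.log (1 - y) = - Real.log (1+e) := by
    rw [h1my, Real.log_inv]
  have hle : Real.log (1+e) ≤ (∑ i ∈ range 9, y ^ (i + 1) / (i + 1)) + |y| ^ 10 / (1 - |y|) := by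
    have h3 := (abs_le.mp habs).1
    rw [hlog] at h3
    linarith
  have hmul := mul_le_mul_of_nonneg_left hle (by positivity : (0:ℝ) ≤ (1+e)^9)
  refine hmul.trans (le_of_eq ?_)
  rw [abs_of_nonneg hy0]
  simp only [Finset.sum_range_succ, Finset.sum_range_zero]
  rw [hy]
  have hne : (1:ℝ) + e ≠ 0 := ne_of_gt hpe
  have hne2 : 1 - e/(1+e) ≠ 0 := by
    rw [show 1 - e/(1+e) = (1+e)⁻¹ from by field_simp; ring]
    positivity
  rw [show 1 - e/(1+e) = (1+e)⁻¹ from by field_simp; ring]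
  rw [div_inv_eq_mul]
  norm_num
  field_simp
  ring

lemma lB (e : ℝ) (h0 : 0 ≤ e) (h1 : e < 1) :
    (1-e)^2 * Real.log (1-e) ≤
      -1*e + (3/2)*e^2 - (1/3)*e^3 - (1/12)*e^4 - (1/30)*e^5 - (1/60)*e^6 - (1/105)*e^7
        - (1/168)*e^8 - (1/252)*e^9 + (79/72)*e^10 - (10/9)*e^11 := by
  have he1 : |e| < 1 := by rw [abs_of_nonneg h0]; exact h1
  have habs := Real.abs_log_sub_add_sum_range_le he1 9
  have hle : Real.log (1-e) ≤ -(∑ i ∈ range 9, e ^ (i + 1) / (i + 1)) + |e| ^ 10 / (1 - |e|) := by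
    have h3 := (abs_le.mp habs).2
    linarith
  have hmul := mul_le_mul_of_nonneg_left hle (by positivity : (0:ℝ) ≤ (1-e)^2)
  refine hmul.trans (le_of_eq ?_)
  rw [abs_of_nonneg h0]
  simp only [Finset.sum_range_succ, Finset.sum_range_zero]
  have hne : (1:ℝ) - e ≠ 0 := by intro h; nlinarith
  field_simp
  ring

lemma lC (e : ℝ) (h0 : 0 ≤ e) (h1 : e ≤ 1) :
    1*e^2 + (17/2)*e^4 + (191/6)*e^6 + (275/4)*e^8 + (1879/20)*e^10 + (2509/30)*e^12
      + (3349/70)*e^14 + (4609/280)*e^16 + (7129/2520)*e^18 - 1*e^20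
    ≤ (1+e^2)^9 * Real.log (1+e^2) := by
  have hpe : (0:ℝ) < 1 + e^2 := by positivity
  set z : ℝ := e^2 / (1+e^2) with hz
  have hz0 : 0 ≤ z := by positivity
  have hz1 : z < 1 := by rw [hz, div_lt_one hpe]; linarith
  have hzlt : |z| < 1 := by rw [abs_of_nonneg hz0]; exact hz1
  have habs := Real.abs_log_sub_add_sum_range_le hzlt 9
  have h1mz : 1 - z = (1+e^2)⁻¹ := by rw [hz]; field_simp; ring
  have hlog : Real.log (1 - z) = - Real.log (1+e^2) := by rw [h1mz, Real.log_inv]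
  have hge : (∑ i ∈ range 9, z ^ (i + 1) / (i + 1)) - |z| ^ 10 / (1 - |z|) ≤ Real.log (1+e^2) := by
    have h3 := (abs_le.mp habs).2
    rw [hlog] at h3
    linarith
  have hmul := mul_le_mul_of_nonneg_left hge (by positivity : (0:ℝ) ≤ (1+e^2)^9)
  refine (le_of_eq ?_).trans hmul
  rw [abs_of_nonneg hz0]
  simp only [Finset.sum_range_succ, Finset.sum_range_zero]
  rw [hz]
  have hne : (1:ℝ) + e^2 ≠ 0 := ne_of_gt hpe
  have hne2 : 1 - e^2/(1+e^2) ≠ 0 := by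
    rw [show 1 - e^2/(1+e^2) = (1+e^2)⁻¹ from by field_simp; ring]
    positivity
  rw [show 1 - e^2/(1+e^2) = (1+e^2)⁻¹ from by field_simp; ring]
  rw [div_inv_eq_mul]
  norm_num
  field_simp
  ring

set_option maxHeartbeats 2000000 in
lemma NS (e : ℝ) (h0 : 0 ≤ e) (h1 : e ≤ 1) :
    ((1+e)^2 * Real.log ((1+e)^2) + (1-e)^2 * Real.log ((1-e)^2))/2 - (1+e^2)*Real.log (1+e^2)
      ≤ 2*e^2 - (8/3)*(Real.sqrt (1+e^2) - 1)^2 := by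
  have hrwA : Real.log ((1+e)^2) = 2 * Real.log (1+e) := by
    rw [Real.log_pow]; norm_num
  have hrwB : Real.log ((1-e)^2) = 2 * Real.log (1-e) := by
    rw [Real.log_pow]; norm_num
  rw [hrwA, hrwB]
  have hs2 : (Real.sqrt (1+e^2))^2 = 1+e^2 := Real.sq_sqrt (by positivity)
  set s : ℝ := Real.sqrt (1+e^2) with hsdef
  have hps : (s-1)^2 = 2 + e^2 - 2*s := by linear_combination hs2
  have hq : 1 + (1/2)*e^2 - (1/8)*(e^2)^2 + (1/16)*(e^2)^3 - (5/128)*(e^2)^4 + (7/256)*(e^2)^5 - (21/1024)*(e^2)^6 ≤ s :=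
    lq (e^2) (sq_nonneg e) (by nlinarith)
  rcases eq_or_lt_of_le h1 with rfl | h1'
  · have hlt := Real.log_two_lt_d9
    have h2s : (1.414213:ℝ) ≤ s := by
      nlinarith [Real.sqrt_nonneg ((1:ℝ)+1^2), hs2]
    norm_num at *
    nlinarith [h2s, hlt]
  · have hpi : (0:ℝ) < (1+e)^9*(1+e^2)^9 := by positivity
    have h1e : (0:ℝ) ≤ 1 - e := by linarith
    have hMnn : (0:ℝ) ≤ (1/5)*e^6*(1-e)^33 + (42/5)*e^7*(1-e)^32 + (144553/840)*e^8*(1-e)^31 + (48121/21)*e^9*(1-e)^30 + (112362199/5040)*e^10*(1-e)^29 + (425585341/2520)*e^11*(1-e)^28 + (20895253567/20160)*e^12*(1-e)^27 + (592948091/112)*e^13*(1-e)^26 + (25696889797/1120)*e^14*(1-e)^25 + (143755883749/1680)*e^15*(1-e)^24 + (58294516877/210)*e^16*(1-e)^23 + (66336643627/84)*e^17*(1-e)^22 + (1248925650593/630)*e^18*(1-e)^21 + (5558329315823/1260)*e^19*(1-e)^20 + (1100040061139/126)*e^20*(1-e)^19 + (277202216629/18)*e^21*(1-e)^18 + (2036090850361/84)*e^22*(1-e)^17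 + (1429966787521/42)*e^23*(1-e)^16 + (7163781281137/168)*e^24*(1-e)^15 + (998153077967/21)*e^25*(1-e)^14 + (39491498921957/840)*e^26*(1-e)^13 + (51775069420621/1260)*e^27*(1-e)^12 + (19881785259859/630)*e^28*(1-e)^11 + (1331960394595/63)*e^29*(1-e)^10 + (7712121181307/630)*e^30*(1-e)^9 + (635843295161/105)*e^31*(1-e)^8 + (88352948168/35)*e^32*(1-e)^7 + (18345084400/21)*e^33*(1-e)^6 + (26035297712/105)*e^34*(1-e)^5 + (6075882656/105)*e^35*(1-e)^4 + (3621829952/315)*e^36*(1-e)^3 + (42864256/21)*e^37*(1-e)^2 + (13543808/45)*e^38*(1-e)^1 + (8021248/315)*e^39 := by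
      repeat' apply add_nonneg
      all_goals first
        | exact mul_nonneg (by positivity) (pow_nonneg h1e _)
        | positivity
    have b1 := mul_le_mul_of_nonneg_left (lA e h0 h1') (by positivity : (0:ℝ) ≤ (1+e^2)^9*(1+e)^2)
    have b2 := mul_le_mul_of_nonneg_left (lB e h0 h1') (by positivity : (0:ℝ) ≤ (1+e)^9*(1+e^2)^9)
    have b3 := mul_le_mul_of_nonneg_left (lC e h0 h1) (by positivity : (0:ℝ) ≤ (1+e)^9*(1+e^2))
    have b4 := mul_le_mul_of_nonneg_left hq (by positivity : (0:ℝ) ≤ (16/3)*((1+e)^9*(1+e^2)^9))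
    have hkey : ((1+e^2)^9*(1+e)^2) * (1*e + (17/2)*e^2 + (191/6)*e^3 + (275/4)*e^4 + (1879/20)*e^5 + (2509/30)*e^6 + (3349/70)*e^7 + (4609/280)*e^8 + (7129/2520)*e^9 + 1*e^10)
        + ((1+e)^9*(1+e^2)^9) * (-1*e + (3/2)*e^2 - (1/3)*e^3 - (1/12)*e^4 - (1/30)*e^5 - (1/60)*e^6 - (1/105)*e^7 - (1/168)*e^8 - (1/252)*e^9 + (79/72)*e^10 - (10/9)*e^11)
        - ((1+e)^9*(1+e^2)) * (1*e^2 + (17/2)*e^4 + (191/6)*e^6 + (275/4)*e^8 + (1879/20)*e^10 + (2509/30)*e^12 + (3349/70)*e^14 + (4609/280)*e^16 + (7129/2520)*e^18 - 1*e^20)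
        + ((1+e)^9*(1+e^2)^9) * ((8/3)*(2+e^2-2*(1 + (1/2)*e^2 - (1/8)*(e^2)^2 + (1/16)*(e^2)^3 - (5/128)*(e^2)^4 + (7/256)*(e^2)^5 - (21/1024)*(e^2)^6)))
        + ((1/5)*e^6*(1-e)^33 + (42/5)*e^7*(1-e)^32 + (144553/840)*e^8*(1-e)^31 + (48121/21)*e^9*(1-e)^30 + (112362199/5040)*e^10*(1-e)^29 + (425585341/2520)*e^11*(1-e)^28 + (20895253567/20160)*e^12*(1-e)^27 + (592948091/112)*e^13*(1-e)^26 + (25696889797/1120)*e^14*(1-e)^25 + (143755883749/1680)*e^15*(1-e)^24 + (58294516877/210)*e^16*(1-e)^23 + (66336643627/84)*e^17*(1-e)^22 + (1248925650593/630)*e^18*(1-e)^21 + (5558329315823/1260)*e^19*(1-e)^20 + (1100040061139/126)*e^20*(1-e)^19 + (277202216629/18)*e^21*(1-e)^18 + (2036090850361/84)*e^22*(1-e)^17 + (1429966787521/42)*e^23*(1-e)^16 + (7163781281137/168)*e^24*(1-e)^15 + (998153077967/21)*e^25*(1-e)^14 + (39491498921957/840)*e^26*(1-e)^13 + (51775069420621/1260)*e^27*(1-e)^12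 + (19881785259859/630)*e^28*(1-e)^11 + (1331960394595/63)*e^29*(1-e)^10 + (7712121181307/630)*e^30*(1-e)^9 + (635843295161/105)*e^31*(1-e)^8 + (88352948168/35)*e^32*(1-e)^7 + (18345084400/21)*e^33*(1-e)^6 + (26035297712/105)*e^34*(1-e)^5 + (6075882656/105)*e^35*(1-e)^4 + (3621829952/315)*e^36*(1-e)^3 + (42864256/21)*e^37*(1-e)^2 + (13543808/45)*e^38*(1-e)^1 + (8021248/315)*e^39)
        = ((1+e)^9*(1+e^2)^9) * (2*e^2) := by ring
    have H : ((1+e)^9*(1+e^2)^9) * (((1+e)^2 * (2*Real.log (1+e)) + (1-e)^2 * (2*Real.log (1-e)))/2 - (1+e^2)*Real.log (1+e^2))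
        ≤ ((1+e)^9*(1+e^2)^9) * (2*e^2 - (8/3)*(s-1)^2) := by
      have e1 : ((1+e)^9*(1+e^2)^9) * (((1+e)^2 * (2*Real.log (1+e)) + (1-e)^2 * (2*Real.log (1-e)))/2 - (1+e^2)*Real.log (1+e^2))
          = ((1+e^2)^9*(1+e)^2) * ((1+e)^9 * Real.log (1+e))
            + ((1+e)^9*(1+e^2)^9) * ((1-e)^2 * Real.log (1-e))
            - ((1+e)^9*(1+e^2)) * ((1+e^2)^9 * Real.log (1+e^2)) := by ring
      have e2 : ((1+e)^9*(1+e^2)^9) * (2*e^2 - (8/3)*(s-1)^2)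
          = ((1+e)^9*(1+e^2)^9) * (2*e^2) - ((1+e)^9*(1+e^2)^9) * ((8/3)*(2+e^2)) + ((16/3)*((1+e)^9*(1+e^2)^9))*s := by
        rw [hps]; ring
      rw [e1, e2]
      linarith [b1, b2, b3, b4, hMnn, hkey]
    exact le_of_mul_le_mul_left H hpi


lemma logsq_scale (σ t : ℝ) (hσ : σ ≠ 0) :
    (σ*t)^2 * Real.log ((σ*t)^2) = σ^2*t^2*Real.log (σ^2) + σ^2*t^2*Real.log (t^2) := by
  rcases eq_or_ne t 0 with rfl|ht
  · simp
  · rw [show (σ*t)^2 = σ^2*t^2 by ring,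
      Real.log_mul (pow_ne_zero 2 hσ) (pow_ne_zero 2 ht)]
    ring

lemma Sscaled (σ e : ℝ) (hσ : 0 < σ) (he0 : 0 ≤ e) (he1 : e ≤ 1) :
    ((σ*(1+e))^2*Real.log ((σ*(1+e))^2) + (σ*(1-e))^2*Real.log ((σ*(1-e))^2))/2
      - (((σ*(1+e))^2+(σ*(1-e))^2)/2)*Real.log (((σ*(1+e))^2+(σ*(1-e))^2)/2)
      ≤ (σ*(1+e)-σ*(1-e))^2/2
        - (8/3)*(Real.sqrt (((σ*(1+e))^2+(σ*(1-e))^2)/2) - (σ*(1+e)+σ*(1-e))/2)^2 := by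
  have e1 := logsq_scale σ (1+e) (ne_of_gt hσ)
  have e2 := logsq_scale σ (1-e) (ne_of_gt hσ)
  have e3 : ((σ*(1+e))^2+(σ*(1-e))^2)/2 = σ^2*(1+e^2) := by ring
  have e4 : Real.log (σ^2*(1+e^2)) = Real.log (σ^2) + Real.log (1+e^2) :=
    Real.log_mul (by positivity) (by positivity)
  have e5 : Real.sqrt (σ^2*(1+e^2)) = σ * Real.sqrt (1+e^2) := by
    rw [show σ^2*(1+e^2) = (σ*Real.sqrt (1+e^2))^2 by
        rw [mul_pow, Real.sq_sqrt (by positivity : (0:ℝ) ≤ 1+e^2)],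
      Real.sqrt_sq (by positivity)]
  rw [e3, e4, e5, e1, e2]
  have h := mul_le_mul_of_nonneg_left (NS e he0 he1) (sq_nonneg σ)
  nlinarith [h]

lemma Sgen1 (a c : ℝ) (ha : 0 ≤ a) (hc : 0 ≤ c) (hca : c ≤ a) :
    (a^2*Real.log (a^2) + c^2*Real.log (c^2))/2 - ((a^2+c^2)/2)*Real.log ((a^2+c^2)/2)
      ≤ (a-c)^2/2 - (8/3)*(Real.sqrt ((a^2+c^2)/2) - (a+c)/2)^2 := by
  rcases eq_or_lt_of_le (by positivity : (0:ℝ) ≤ a + c) with h0|hpos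
  · have ha0 : a = 0 := by linarith
    have hc0 : c = 0 := by linarith
    subst ha0; subst hc0
    norm_num
  · have he0 : 0 ≤ (a-c)/(a+c) := div_nonneg (by linarith) (by linarith)
    have he1 : (a-c)/(a+c) ≤ 1 := by rw [div_le_one hpos]; linarith
    have H := Sscaled ((a+c)/2) ((a-c)/(a+c)) (by positivity) he0 he1
    have hne : a + c ≠ 0 := ne_of_gt hpos
    rw [show ((a+c)/2)*(1+(a-c)/(a+c)) = a by field_simp; ring,
        show ((a+c)/2)*(1-(a-c)/(a+c)) = c by field_simp; ring] at H
    exact H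

lemma Sgen (a c : ℝ) (ha : 0 ≤ a) (hc : 0 ≤ c) :
    (a^2*Real.log (a^2) + c^2*Real.log (c^2))/2 - ((a^2+c^2)/2)*Real.log ((a^2+c^2)/2)
      ≤ (a-c)^2/2 - (8/3)*(Real.sqrt ((a^2+c^2)/2) - (a+c)/2)^2 := by
  rcases le_total c a with hca|hac
  · exact Sgen1 a c ha hc hca
  · have H := Sgen1 c a hc ha hac
    rw [show (c^2+a^2)/2 = (a^2+c^2)/2 by ring] at H
    nlinarith [H]

lemma exp_neg_pi_div_two : Complex.exp (-(Real.pi/2 : ℝ) * Complex.I) = -Complex.I := by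
  rw [Complex.exp_mul_I, Complex.cos_neg, Complex.sin_neg]
  rw [show ((Real.pi/2 : ℝ) : ℂ) = ((Real.pi : ℝ) : ℂ)/2 by push_cast; ring]
  rw [Complex.cos_pi_div_two, Complex.sin_pi_div_two]
  simp

lemma exp_quarter (m : ℕ) :
    Complex.exp (-(2 * (Real.pi:ℂ) * Complex.I * m) / 4) = (-Complex.I)^m := by
  have h : (-(2 * (Real.pi:ℂ) * Complex.I * m) / 4) = m * (((-(Real.pi/2 : ℝ)) : ℂ) * Complex.I) := by
    push_cast; ring
  rw [h, Complex.exp_nat_mul, exp_neg_pi_div_two]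


lemma fcoeff_gen (f : Fin 4 → ℝ) (k : Fin 4) :
    fcoeffR 4 f k = (1/4 : ℂ) * ((f 0 : ℂ) + (f 1 : ℂ) * (-Complex.I)^(k.val)
      + (f 2 : ℂ) * (-Complex.I)^(2*k.val) + (f 3 : ℂ) * (-Complex.I)^(3*k.val)) := by
  rw [fcoeffR, Fin.sum_univ_four, show ((4:ℕ):ℂ) = 4 from by norm_num]
  have e0 : Complex.exp (-(2 * (Real.pi:ℂ) * Complex.I * (k.val:ℂ) * (((0:Fin 4).val:ℕ):ℂ)) / 4) = (-Complex.I)^(0*k.val) := by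
    rw [show (-(2 * (Real.pi:ℂ) * Complex.I * (k.val:ℂ) * (((0:Fin 4).val:ℕ):ℂ)) / 4) = (-(2 * (Real.pi:ℂ) * Complex.I * ((0*k.val : ℕ):ℂ)) / 4) by push_cast [show ((0:Fin 4).val) = 0 from rfl]; ring]
    exact exp_quarter _
  have e1 : Complex.exp (-(2 * (Real.pi:ℂ) * Complex.I * (k.val:ℂ) * (((1:Fin 4).val:ℕ):ℂ)) / 4) = (-Complex.I)^(k.val) := by
    rw [show (-(2 * (Real.pi:ℂ) * Complex.I * (k.val:ℂ) * (((1:Fin 4).val:ℕ):ℂ)) / 4) = (-(2 * (Real.pi:ℂ) * Complex.I * ((1*k.val : ℕ):ℂ)) / 4) by push_cast [show ((1:Fin 4).val) = 1 from rfl]; ring]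
    rw [exp_quarter]; norm_num
  have e2 : Complex.exp (-(2 * (Real.pi:ℂ) * Complex.I * (k.val:ℂ) * (((2:Fin 4).val:ℕ):ℂ)) / 4) = (-Complex.I)^(2*k.val) := by
    rw [show (-(2 * (Real.pi:ℂ) * Complex.I * (k.val:ℂ) * (((2:Fin 4).val:ℕ):ℂ)) / 4) = (-(2 * (Real.pi:ℂ) * Complex.I * ((2*k.val : ℕ):ℂ)) / 4) by push_cast [show ((2:Fin 4).val) = 2 from rfl]; ring]
    exact exp_quarter _
  have e3 : Complex.exp (-(2 * (Real.pi:ℂ) * Complex.I * (k.val:ℂ) * (((3:Fin 4).val:ℕ):ℂ)) / 4) = (-Complex.I)^(3*k.val) := by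
    rw [show (-(2 * (Real.pi:ℂ) * Complex.I * (k.val:ℂ) * (((3:Fin 4).val:ℕ):ℂ)) / 4) = (-(2 * (Real.pi:ℂ) * Complex.I * ((3*k.val : ℕ):ℂ)) / 4) by push_cast [show ((3:Fin 4).val) = 3 from rfl]; ring]
    exact exp_quarter _
  rw [e0, e1, e2, e3]
  norm_num

lemma rhs_eval (f : Fin 4 → ℝ) :
    2 * ∑ k : Fin 4, phi4 k * ‖fcoeffR 4 f k‖ ^ 2
    = ((f 0 - f 2)^2 + (f 1 - f 3)^2)/4 + (f 0 - f 1 + f 2 - f 3)^2/5 := by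
  have hI2 : (-Complex.I)^2 = -1 := by
    rw [neg_pow, Complex.I_sq]; norm_num
  have hI3 : (-Complex.I)^3 = Complex.I := by
    rw [pow_succ, hI2]; ring
  have h1 : fcoeffR 4 f 1 = (((f 0 - f 2)/4 : ℝ) : ℂ) + (((f 3 - f 1)/4 : ℝ):ℂ) * Complex.I := by
    rw [fcoeff_gen, show ((1:Fin 4).val) = 1 from rfl]
    norm_num [hI2, hI3]
    push_cast
    ring
  have h2 : fcoeffR 4 f 2 = (((f 0 - f 1 + f 2 - f 3)/4 : ℝ) : ℂ) + ((0 : ℝ):ℂ) * Complex.I := by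
    rw [fcoeff_gen, show ((2:Fin 4).val) = 2 from rfl]
    rw [show (-Complex.I)^(2*2) = 1 by rw [pow_mul, hI2]; norm_num,
        show (-Complex.I)^(3*2) = -1 by rw [show 3*2=6 from rfl, show (6:ℕ)=2*3 from rfl, pow_mul, hI2]; norm_num, hI2]
    push_cast
    ring
  have h3 : fcoeffR 4 f 3 = (((f 0 - f 2)/4 : ℝ) : ℂ) + (((f 1 - f 3)/4 : ℝ):ℂ) * Complex.I := by
    rw [fcoeff_gen, show ((3:Fin 4).val) = 3 from rfl]
    rw [hI3, show (-Complex.I)^(2*3) = -1 by rw [show 2*3=6 from rfl, show (6:ℕ)=2*3 from rfl, pow_mul, hI2]; norm_num,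
        show (-Complex.I)^(3*3) = -Complex.I by rw [show 3*3=9 from rfl, show (9:ℕ)=8+1 from rfl, pow_succ, show (8:ℕ)=2*4 from rfl, pow_mul, hI2]; norm_num]
    push_cast
    ring
  have habs1 : ‖fcoeffR 4 f 1‖^2 = ((f 0 - f 2)/4)^2 + ((f 3 - f 1)/4)^2 := by
    rw [h1, Complex.sq_norm, Complex.normSq_add_mul_I]
  have habs2 : ‖fcoeffR 4 f 2‖^2 = ((f 0 - f 1 + f 2 - f 3)/4)^2 + (0:ℝ)^2 := by
    rw [h2, Complex.sq_norm, Complex.normSq_add_mul_I]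
  have habs3 : ‖fcoeffR 4 f 3‖^2 = ((f 0 - f 2)/4)^2 + ((f 1 - f 3)/4)^2 := by
    rw [h3, Complex.sq_norm, Complex.normSq_add_mul_I]
  rw [Fin.sum_univ_four, habs1, habs2, habs3,
    show phi4 0 = 0 by norm_num [phi4], show phi4 1 = 1 by norm_num [phi4],
    show phi4 2 = 8/5 by simp [phi4], show phi4 3 = 1 by rfl]
  ring

end Aux

set_option maxHeartbeats 2000000 in
/-- the log-Sobolev inequality with constant 2 on `ℤ_4`
for the modified weight `φ_4 = (0,1,8/5,1)`. -/
theorem logSobolev_Z4_phi4 (f : Fin 4 → ℝ) (hf : ∀ x, 0 ≤ f x) :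
    (1 / 4 : ℝ) * ∑ x : Fin 4, f x ^ 2 * Real.log (f x ^ 2)
      - ((1 / 4 : ℝ) * ∑ x : Fin 4, f x ^ 2) *
        Real.log ((1 / 4 : ℝ) * ∑ x : Fin 4, f x ^ 2)
    ≤ 2 * ∑ k : Fin 4, phi4 k * ‖fcoeffR 4 f k‖ ^ 2 := by
  rw [rhs_eval]
  simp only [Fin.sum_univ_four]
  have ha := hf 0
  have hb := hf 1
  have hc := hf 2
  have hd := hf 3
  set a := f 0
  set b := f 1
  set c := f 2
  set d := f 3
  have hu0 : (0:ℝ) ≤ (a^2+c^2)/2 := by positivity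
  have hv0 : (0:ℝ) ≤ (b^2+d^2)/2 := by positivity
  set X := Real.sqrt ((a^2+c^2)/2) with hXdef
  set Y := Real.sqrt ((b^2+d^2)/2) with hYdef
  have hX0 : 0 ≤ X := Real.sqrt_nonneg _
  have hY0 : 0 ≤ Y := Real.sqrt_nonneg _
  have hX2 : X^2 = (a^2+c^2)/2 := Real.sq_sqrt hu0
  have hY2 : Y^2 = (b^2+d^2)/2 := Real.sq_sqrt hv0
  have hS1 := Sgen a c ha hc
  have hS2 := Sgen b d hb hd
  have hS3 := Sgen X Y hX0 hY0
  rw [hX2, hY2] at hS3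
  have hS3w : ((a^2+c^2)/2*Real.log ((a^2+c^2)/2) + (b^2+d^2)/2*Real.log ((b^2+d^2)/2))/2
      - (((a^2+c^2)/2+(b^2+d^2)/2)/2)*Real.log (((a^2+c^2)/2+(b^2+d^2)/2)/2) ≤ (X-Y)^2/2 := by
    have h := sq_nonneg (Real.sqrt (((a^2+c^2)/2+(b^2+d^2)/2)/2) - (X+Y)/2)
    linarith [hS3]
  have hm : ((a^2+c^2)/2+(b^2+d^2)/2)/2 = 1/4*(a^2+b^2+c^2+d^2) := by ring
  rw [hm] at hS3w
  have hXs : (a+c)/2 ≤ X := Real.le_sqrt_of_sq_le (by nlinarith [sq_nonneg (a-c)])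
  have hYt : (b+d)/2 ≤ Y := Real.le_sqrt_of_sq_le (by nlinarith [sq_nonneg (b-d)])
  have hgoalm : (1/4 : ℝ)*(a^2+(b^2+(c^2+d^2)))  = 1/4*(a^2+b^2+c^2+d^2) := by ring
  nlinarith [hS1, hS2, hS3w, hX2, hY2,
    sq_nonneg (3*((a+c)/2 - (b+d)/2) - 5*((X - (a+c)/2) - (Y - (b+d)/2))),
    mul_nonneg (sub_nonneg.mpr hXs) (sub_nonneg.mpr hYt)]
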